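/- arXiv:math/0502019 — 2 statements merged into one kernel-verified Lean document; each statement's English description precedes it below -/
import Mathlib

section
/- Let q be a real number with 0 < q < 1, let r ≥ 1 be an integer, let w₁,…,w_r > 0 be reals, let f be a positive integer and χ a complex Dirichlet character modulo f. Then for all integers n ≥ r, the generalized multiple Changhee q-Bernoulli numbers satisfy the distribution relation B^{(r)}_{n,χ}(q | w₁,…,w_r) = [f]_q^{n−r} · Σ_{a₁,…,a_r = 1}^{f} (Π_{i=1}^{r} χ(a_i)) · B^{(r)}_n( (w₁a₁+…+w_ra_r)/f : q^f | w₁,…,w_r ), where on the right the polynomial is formed with q replaced by q^f. -/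
open Finset

/-- The q-analogue `[z]_q = (1 - q^z)/(1 - q)` for a real exponent `z`. -/
noncomputable def qn (q z : ℝ) : ℝ := (1 - q ^ z) / (1 - q)

/-- The Barnes-type multiple Changhee q-Bernoulli polynomial (for `n ≥ r ≥ 1`):
`B^{(r)}_n(w:q|w₁,…,w_r) = (-1)^r·(Π wᵢ)·(n!/(n-r)!)·Σ_{ν} q^{w+Σ wᵢνᵢ}·[w+Σ wᵢνᵢ]_q^{n-r}`. -/
noncomputable def multB (q : ℝ) (r : ℕ) (w : ℝ) (ws : Fin r → ℝ) (n : ℕ) : ℝ :=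
  (-1) ^ r * (∏ i, ws i) * ((n.factorial : ℝ) / ((n - r).factorial : ℝ)) *
    ∑' ν : Fin r → ℕ, q ^ (w + ∑ i, ws i * (ν i : ℝ))
      * qn q (w + ∑ i, ws i * (ν i : ℝ)) ^ (n - r)

/-- The generalized multiple Changhee q-Bernoulli number attached to `χ`:
`B^{(r)}_{n,χ}(q|w₁,…,w_r) = (-1)^r·(Π wⱼ)·(n!/(n-r)!)·
  Σ_{n₁,…,n_r ≥ 1} (Π χ(n_k))·q^{Σ w_m n_m}·[Σ w_m n_m]_q^{n-r}`. -/
noncomputable def genMultB (q : ℝ) (r : ℕ) (ws : Fin r → ℝ) {f : ℕ}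
    (χ : DirichletCharacter ℂ f) (n : ℕ) : ℂ :=
  (-1) ^ r * ((∏ j, ws j : ℝ) : ℂ) * (((n.factorial : ℝ) / ((n - r).factorial : ℝ) : ℝ) : ℂ) *
    ∑' ν : Fin r → ℕ, (∏ k, χ ((ν k + 1 : ℕ) : ZMod f))
      * ((q ^ (∑ m, ws m * ((ν m : ℝ) + 1)) : ℝ) : ℂ)
      * ((qn q (∑ m, ws m * ((ν m : ℝ) + 1)) ^ (n - r) : ℝ) : ℂ)

lemma rpow_finset_sum {q : ℝ} (hq : 0 < q) {ι : Type*} (s : Finset ι) (t : ι → ℝ) :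
    q ^ (∑ i ∈ s, t i) = ∏ i ∈ s, q ^ t i := by
  classical
  induction s using Finset.induction with
  | empty => simp
  | insert _ _ h ih => rw [Finset.sum_insert h, Finset.prod_insert h, Real.rpow_add hq, ih]

lemma pi_pow_step (r : ℕ) (c : Fin (r+1) → ℝ) (h0 : ∀ i, 0 ≤ c i) (h1 : ∀ i, c i < 1)
    (hih : Summable (fun ν : Fin r → ℕ => ∏ i, c i.succ ^ ν i)) :
    Summable (fun ν : Fin (r+1) → ℕ => ∏ i, c i ^ ν i) := by
  have hgeo : Summable (fun k : ℕ => c 0 ^ k) := summable_geometric_of_lt_one (h0 0) (h1 0)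
  have h3 : ∀ x : ℕ, 0 ≤ c 0 ^ x := fun x => pow_nonneg (h0 0) x
  have h4 : ∀ x : Fin r → ℕ, 0 ≤ ∏ i, c i.succ ^ x i :=
    fun x => Finset.prod_nonneg fun i _ => pow_nonneg (h0 _) _
  have hs := @Summable.mul_of_nonneg ℕ (Fin r → ℕ) (fun k => c 0 ^ k)
    (fun ν => ∏ i, c i.succ ^ ν i) hgeo hih h3 h4
  apply (Equiv.summable_iff (Fin.consEquiv fun _ : Fin (r+1) => ℕ)).1
  refine hs.congr fun p => ?_
  simp only [Function.comp, Fin.consEquiv_apply]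
  rw [Fin.prod_univ_succ]
  simp

lemma summable_pi_pow : ∀ (r : ℕ) (c : Fin r → ℝ), (∀ i, 0 ≤ c i) → (∀ i, c i < 1) →
    Summable (fun ν : Fin r → ℕ => ∏ i, c i ^ ν i) := by
  intro r
  induction r with
  | zero => intro c _ _; exact Summable.of_finite
  | succ r ih =>
    intro c h0 h1
    exact pi_pow_step r c h0 h1 (ih _ (fun i => h0 _) (fun i => h1 _))

def changheeEquiv (r f : ℕ) (hf : 0 < f) : (Fin r → Fin f) × (Fin r → ℕ) ≃ (Fin r → ℕ) where
  toFun p := fun i => (p.1 i : ℕ) + f * p.2 i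
  invFun ν := (fun i => ⟨ν i % f, Nat.mod_lt _ hf⟩, fun i => ν i / f)
  left_inv p := by
    refine Prod.ext (funext fun i => ?_) (funext fun i => ?_)
    · apply Fin.ext
      simp [Nat.add_mul_mod_self_left, Nat.mod_eq_of_lt (p.1 i).isLt]
    · simp [Nat.add_mul_div_left _ _ hf, Nat.div_eq_of_lt (p.1 i).isLt]
  right_inv ν := by
    funext i
    exact Nat.mod_add_div _ _

lemma qn_nonneg {q : ℝ} (hq0 : 0 ≤ q) (hq1 : q < 1) {t : ℝ} (ht : 0 ≤ t) : 0 ≤ qn q t := by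
  have := Real.rpow_le_one hq0 hq1.le ht
  have h2 : (0:ℝ) < 1 - q := by linarith
  exact div_nonneg (by linarith) h2.le

lemma qn_le {q : ℝ} (hq0 : 0 ≤ q) (hq1 : q < 1) {t : ℝ} (ht : 0 ≤ t) : qn q t ≤ (1 - q)⁻¹ := by
  have h1 : (0:ℝ) ≤ q ^ t := Real.rpow_nonneg hq0 t
  have h2 : (0:ℝ) < 1 - q := by linarith
  rw [qn, div_eq_mul_inv]
  nlinarith [inv_pos.2 h2]

lemma key_rpow {q : ℝ} (hq0 : 0 < q) (f : ℕ) (x : ℝ) :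
    q ^ ((f : ℝ) * x) = (q ^ f) ^ x := by
  rw [Real.rpow_mul hq0.le, Real.rpow_natCast]

lemma key_qn {q : ℝ} (hq0 : 0 < q) (hq1 : q < 1) {f : ℕ} (hf : 0 < f) (x : ℝ) :
    qn q ((f : ℝ) * x) = qn q (f : ℝ) * qn (q ^ f) x := by
  have hqf1 : q ^ f < 1 := pow_lt_one₀ hq0.le hq1 hf.ne'
  have h1 : (1 : ℝ) - q ≠ 0 := by linarith
  have h2 : (1 : ℝ) - q ^ f ≠ 0 := by linarith
  rw [qn, qn, qn, key_rpow hq0, Real.rpow_natCast]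
  field_simp

/-- Distribution relation for the generalized multiple Changhee q-Bernoulli numbers:
`B^{(r)}_{n,χ}(q|w₁,…,w_r) = [f]_q^{n-r}·Σ_{a₁,…,a_r=1}^{f} (Π χ(aᵢ))·
  B^{(r)}_n((w₁a₁+…+w_ra_r)/f : q^f | w₁,…,w_r)`. -/
theorem genMultB_distribution (q : ℝ) (hq0 : 0 < q) (hq1 : q < 1)
    (r : ℕ) (hr : 1 ≤ r) (ws : Fin r → ℝ) (hws : ∀ i, 0 < ws i)
    (f : ℕ) (hf : 0 < f) (χ : DirichletCharacter ℂ f)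
    (n : ℕ) (hn : r ≤ n) :
    genMultB q r ws χ n
      = ((qn q (f : ℝ) ^ (n - r) : ℝ) : ℂ)
        * ∑ a : Fin r → Fin f, (∏ i, χ (((a i : ℕ) + 1 : ℕ) : ZMod f))
          * ((multB (q ^ f) r ((∑ i, ws i * (((a i : ℕ) : ℝ) + 1)) / (f : ℝ)) ws n : ℝ) : ℂ) := by
  classical
  have hf0 : (f : ℝ) ≠ 0 := Nat.cast_ne_zero.2 hf.ne'
  have hqf0 : 0 < q ^ f := pow_pos hq0 f
  have hqf1 : q ^ f < 1 := pow_lt_one₀ hq0.le hq1 hf.ne'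
  set E := changheeEquiv r f hf with hE
  set g : (Fin r → ℕ) → ℂ := fun ν =>
    (∏ k, χ ((ν k + 1 : ℕ) : ZMod f))
      * ((q ^ (∑ m, ws m * ((ν m : ℝ) + 1)) : ℝ) : ℂ)
      * ((qn q (∑ m, ws m * ((ν m : ℝ) + 1)) ^ (n - r) : ℝ) : ℂ) with hgdef
  have hSnn : ∀ ν : Fin r → ℕ, 0 ≤ ∑ m, ws m * ((ν m : ℝ) + 1) :=
    fun ν => Finset.sum_nonneg fun i _ => mul_nonneg (hws i).le (by positivity)
  -- summability of g
  have hg : Summable g := by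
    set c : Fin r → ℝ := fun i => q ^ (ws i) with hc
    have hc0 : ∀ i, 0 ≤ c i := fun i => Real.rpow_nonneg hq0.le _
    have hc1 : ∀ i, c i < 1 := fun i => Real.rpow_lt_one hq0.le hq1 (hws i)
    have hmaj : Summable (fun ν : Fin r → ℕ => (∏ i, c i ^ ν i : ℝ) * (1 - q)⁻¹ ^ (n - r)) :=
      (summable_pi_pow r c hc0 hc1).mul_right _
    apply Summable.of_norm_bounded hmaj
    intro ν
    have hS := hSnn ν
    have hA : (0 : ℝ) ≤ q ^ (∑ m, ws m * ((ν m : ℝ) + 1)) :=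
      Real.rpow_nonneg hq0.le _
    have hB : (0 : ℝ) ≤ qn q (∑ m, ws m * ((ν m : ℝ) + 1)) ^ (n - r) :=
      pow_nonneg (qn_nonneg hq0.le hq1 hS) _
    have hb1 : ‖∏ k, χ ((ν k + 1 : ℕ) : ZMod f)‖ ≤ 1 := by
      refine le_trans (norm_prod_le _ _) ?_
      exact Finset.prod_le_one (fun _ _ => norm_nonneg _) (fun k _ => χ.norm_le_one _)
    have hqS : q ^ (∑ m, ws m * ((ν m : ℝ) + 1)) ≤ ∏ i, c i ^ ν i := by
      rw [rpow_finset_sum hq0]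
      refine Finset.prod_le_prod (fun i _ => Real.rpow_nonneg hq0.le _) (fun i _ => ?_)
      have h1 : q ^ (ws i * ((ν i : ℝ) + 1)) ≤ q ^ (ws i * (ν i : ℝ)) := by
        refine Real.rpow_le_rpow_of_exponent_ge hq0 hq1.le ?_
        nlinarith [(hws i).le]
      have h2 : q ^ (ws i * (ν i : ℝ)) = c i ^ ν i := by
        rw [Real.rpow_mul hq0.le, Real.rpow_natCast]
      rw [← h2]; exact h1
    have hqn : qn q (∑ m, ws m * ((ν m : ℝ) + 1)) ^ (n - r) ≤ (1 - q)⁻¹ ^ (n - r) :=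
      pow_le_pow_left₀ (qn_nonneg hq0.le hq1 hS) (qn_le hq0.le hq1 hS) _
    rw [hgdef]
    simp only [norm_mul, Complex.norm_real, Real.norm_eq_abs, abs_of_nonneg hA,
      abs_of_nonneg hB]
    calc ‖∏ k, χ ((ν k + 1 : ℕ) : ZMod f)‖ * q ^ (∑ m, ws m * ((ν m : ℝ) + 1))
          * (qn q (∑ m, ws m * ((ν m : ℝ) + 1)) ^ (n - r))
        ≤ 1 * q ^ (∑ m, ws m * ((ν m : ℝ) + 1))
          * (qn q (∑ m, ws m * ((ν m : ℝ) + 1)) ^ (n - r)) := by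
          exact mul_le_mul_of_nonneg_right (mul_le_mul_of_nonneg_right hb1 hA) hB
      _ = q ^ (∑ m, ws m * ((ν m : ℝ) + 1))
          * (qn q (∑ m, ws m * ((ν m : ℝ) + 1)) ^ (n - r)) := by ring
      _ ≤ (∏ i, c i ^ ν i) * (1 - q)⁻¹ ^ (n - r) := by
          refine mul_le_mul hqS hqn hB (Finset.prod_nonneg fun i _ => pow_nonneg (hc0 i) _)
  -- pointwise identity
  have hinner : ∀ (a : Fin r → Fin f) (m : Fin r → ℕ), g (E (a, m)) =
      (∏ i, χ (((a i : ℕ) + 1 : ℕ) : ZMod f)) * ((qn q (f : ℝ) ^ (n - r) : ℝ) : ℂ)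
        * ((((q ^ f) ^ (((∑ i, ws i * (((a i : ℕ) : ℝ) + 1)) / (f : ℝ))
              + ∑ i, ws i * ((m i : ℝ)))
            * qn (q ^ f) (((∑ i, ws i * (((a i : ℕ) : ℝ) + 1)) / (f : ℝ))
              + ∑ i, ws i * ((m i : ℝ))) ^ (n - r) : ℝ)) : ℂ) := by
    intro a m
    have hEam : ∀ j, (E (a, m)) j = (a j : ℕ) + f * m j := fun j => rfl
    have hsum : (∑ j, ws j * (((E (a, m)) j : ℝ) + 1))
        = (f : ℝ) * (((∑ i, ws i * (((a i : ℕ) : ℝ) + 1)) / (f : ℝ))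
            + ∑ i, ws i * ((m i : ℝ))) := by
      have h1 : ∀ j : Fin r, ws j * (((E (a, m)) j : ℝ) + 1)
          = ws j * (((a j : ℕ) : ℝ) + 1) + (f : ℝ) * (ws j * (m j : ℝ)) := by
        intro j
        rw [hEam j]
        push_cast
        ring
      rw [Finset.sum_congr rfl (fun j _ => h1 j), Finset.sum_add_distrib, ← Finset.mul_sum,
        mul_add, mul_div_cancel₀ _ hf0]
    have hchi : (∏ k, χ (((E (a, m)) k + 1 : ℕ) : ZMod f))
        = ∏ i, χ (((a i : ℕ) + 1 : ℕ) : ZMod f) := by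
      refine Finset.prod_congr rfl fun k _ => ?_
      congr 1
      rw [hEam k]
      push_cast
      simp [ZMod.natCast_self]
    rw [hgdef]
    simp only []
    rw [hchi, hsum, key_rpow hq0, key_qn hq0 hq1 hf, mul_pow]
    push_cast
    ring
  -- main rearrangement
  have key : (∑' ν : Fin r → ℕ, g ν) = ∑ a : Fin r → Fin f, ∑' m : Fin r → ℕ, g (E (a, m)) := by
    have hgE : Summable fun p : (Fin r → Fin f) × (Fin r → ℕ) => g (E p) :=
      E.summable_iff.2 hg
    rw [← E.tsum_eq g, hgE.tsum_prod, tsum_fintype]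
  rw [genMultB]
  rw [show (∑' ν : Fin r → ℕ, (∏ k, χ ((ν k + 1 : ℕ) : ZMod f))
      * ((q ^ (∑ m, ws m * ((ν m : ℝ) + 1)) : ℝ) : ℂ)
      * ((qn q (∑ m, ws m * ((ν m : ℝ) + 1)) ^ (n - r) : ℝ) : ℂ)) = ∑' ν, g ν from rfl, key]
  rw [Finset.mul_sum, Finset.mul_sum]
  refine Finset.sum_congr rfl fun a _ => ?_
  have hUa : (∑' m : Fin r → ℕ, g (E (a, m)))
      = (∏ i, χ (((a i : ℕ) + 1 : ℕ) : ZMod f)) * ((qn q (f : ℝ) ^ (n - r) : ℝ) : ℂ)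
        * ((∑' m : Fin r → ℕ, ((q ^ f) ^ (((∑ i, ws i * (((a i : ℕ) : ℝ) + 1)) / (f : ℝ))
              + ∑ i, ws i * ((m i : ℝ)))
            * qn (q ^ f) (((∑ i, ws i * (((a i : ℕ) : ℝ) + 1)) / (f : ℝ))
              + ∑ i, ws i * ((m i : ℝ))) ^ (n - r)) : ℝ) : ℂ) := by
    rw [tsum_congr (hinner a), tsum_mul_left, Complex.ofReal_tsum]
  rw [hUa, multB]
  push_cast
  ring
end

section
/- Let q be a real number with 0 < q < 1, let r ≥ 1 be an integer, let w₁,…,w_r > 0 be reals, let f be a positive integer and χ a complex Dirichlet character modulo f. Then for every complex number s, the Dirichlet-type multiple Changhee q-L-function satisfies L_{q,r}(s, χ | w₁,…,w_r) = [f]_q^{−s} · Σ_{a₁,…,a_r = 1}^{f} (Π_{k=1}^{r} χ(a_k)) · ζ_{q^f,r}( s , (w₁a₁+…+w_ra_r)/f | w₁,…,w_r ), where on the right the multiple q-zeta function is formed with q replaced by q^f. -/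
open Finset

/-- The complex power `r^s := exp(s·log r)` of a positive real `r` (real logarithm). -/
noncomputable def rpowC (r : ℝ) (s : ℂ) : ℂ := Complex.exp (s * (Real.log r : ℂ))

/-- The Barnes-type Changhee multiple q-zeta function
`ζ_{Q,r}(s,w|w₁,…,w_r) = (Π wᵢ)·Σ_{ν} Q^{w+Σ wᵢνᵢ}/[w+Σ wᵢνᵢ]_Q^s`. -/
noncomputable def multZeta (Q : ℝ) (r : ℕ) (w : ℝ) (ws : Fin r → ℝ) (s : ℂ) : ℂ :=
  ((∏ i, ws i : ℝ) : ℂ) * ∑' ν : Fin r → ℕ,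
    ((Q ^ (w + ∑ i, ws i * (ν i : ℝ)) : ℝ) : ℂ)
      / rpowC (qn Q (w + ∑ i, ws i * (ν i : ℝ))) s

/-- The Dirichlet-type multiple Changhee q-L-function
`L_{q,r}(s,χ|w₁,…,w_r) = (Π wⱼ)·Σ_{n₁,…,n_r ≥ 1} (Π χ(n_k))·q^{Σ w_m n_m}/[Σ w_m n_m]_q^s`. -/
noncomputable def multLw (q : ℝ) (r : ℕ) (ws : Fin r → ℝ) {f : ℕ}
    (χ : DirichletCharacter ℂ f) (s : ℂ) : ℂ :=
  ((∏ j, ws j : ℝ) : ℂ) * ∑' ν : Fin r → ℕ, (∏ k, χ ((ν k + 1 : ℕ) : ZMod f))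
    * ((q ^ (∑ m, ws m * ((ν m : ℝ) + 1)) : ℝ) : ℂ)
    / rpowC (qn q (∑ m, ws m * ((ν m : ℝ) + 1))) s

lemma rpowC_ne_zero (ρ : ℝ) (s : ℂ) : rpowC ρ s ≠ 0 := Complex.exp_ne_zero _

lemma rpowC_neg (ρ : ℝ) (s : ℂ) : rpowC ρ (-s) = (rpowC ρ s)⁻¹ := by
  simp [rpowC, neg_mul, Complex.exp_neg]

lemma rpowC_mul_base {a b : ℝ} (ha : 0 < a) (hb : 0 < b) (s : ℂ) :
    rpowC (a * b) s = rpowC a s * rpowC b s := by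
  rw [rpowC, rpowC, rpowC, Real.log_mul ha.ne' hb.ne', ← Complex.exp_add]
  push_cast
  ring_nf

lemma norm_rpowC (ρ : ℝ) (s : ℂ) : ‖rpowC ρ s‖ = Real.exp (s.re * Real.log ρ) := by
  rw [rpowC, Complex.norm_exp]
  congr 1
  simp [Complex.mul_re]

lemma qn_pos {q x : ℝ} (hq0 : 0 < q) (hq1 : q < 1) (hx : 0 < x) : 0 < qn q x := by
  have h1 : q ^ x < 1 := Real.rpow_lt_one hq0.le hq1 hx
  have h2 : (0:ℝ) < 1 - q := by linarith
  exact div_pos (by linarith) h2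

lemma qn_lt {q : ℝ} (hq0 : 0 < q) (hq1 : q < 1) (x : ℝ) : qn q x < 1 / (1 - q) := by
  have h : 0 < q ^ x := Real.rpow_pos_of_pos hq0 x
  rw [qn, div_lt_div_iff₀ (by linarith) (by linarith)]
  nlinarith

lemma qn_mono {q : ℝ} (hq0 : 0 < q) (hq1 : q < 1) {x y : ℝ} (hxy : x ≤ y) :
    qn q x ≤ qn q y := by
  have h := Real.rpow_le_rpow_of_exponent_ge hq0 hq1.le hxy
  rw [qn, qn, div_le_div_iff₀ (by linarith) (by linarith)]
  nlinarith

lemma qn_mul_nat {q : ℝ} (hq0 : 0 < q) (hq1 : q < 1) (f : ℕ) (hf : 0 < f) (x : ℝ) :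
    qn q ((f : ℝ) * x) = qn q (f : ℝ) * qn (q ^ f) x := by
  have hqf : q ^ ((f:ℝ) * x) = (q ^ f) ^ x := by
    rw [Real.rpow_mul hq0.le, Real.rpow_natCast]
  have h1 : (1:ℝ) - q ≠ 0 := by linarith
  have hqf1 : q ^ f < 1 := pow_lt_one₀ hq0.le hq1 hf.ne'
  have h2 : (1:ℝ) - q ^ f ≠ 0 := by linarith
  have h3 : qn q (f:ℝ) = (1 - q ^ f)/(1 - q) := by rw [qn, Real.rpow_natCast]
  rw [qn, hqf, h3, qn]
  field_simp

def decompEquiv (r f : ℕ) (hf : 0 < f) : ((Fin r → Fin f) × (Fin r → ℕ)) ≃ (Fin r → ℕ) where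
  toFun p i := (p.1 i : ℕ) + f * p.2 i
  invFun ν := (fun i => ⟨ν i % f, Nat.mod_lt _ hf⟩, fun i => ν i / f)
  left_inv p := by
    ext i
    · simp [Nat.add_mul_mod_self_left, Nat.mod_eq_of_lt (p.1 i).isLt]
    · simp [Nat.add_mul_div_left _ _ hf, Nat.div_eq_of_lt (p.1 i).isLt]
  right_inv ν := by funext i; exact Nat.mod_add_div _ _

lemma summable_pi_geometric : ∀ (n : ℕ) (c : Fin n → ℝ), (∀ i, 0 ≤ c i) → (∀ i, c i < 1) →
    Summable fun ν : Fin n → ℕ => ∏ i, c i ^ ν i := by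
  intro n
  induction n with
  | zero =>
    intro c h0 h1
    haveI : Finite (Fin 0 → ℕ) := Finite.of_subsingleton
    exact Summable.of_finite
  | succ n ih =>
    intro c h0 h1
    have hg : Summable fun k : ℕ => c 0 ^ k := summable_geometric_of_lt_one (h0 0) (h1 0)
    have ht : Summable fun μ : Fin n → ℕ => ∏ i, c i.succ ^ μ i :=
      ih (fun i => c i.succ) (fun i => h0 _) (fun i => h1 _)
    have hg' : 0 ≤ fun k : ℕ => c 0 ^ k := fun k => pow_nonneg (h0 0) _
    have ht' : 0 ≤ fun μ : Fin n → ℕ => ∏ i, c i.succ ^ μ i :=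
      fun μ => Finset.prod_nonneg fun i _ => pow_nonneg (h0 _) _
    have hs := hg.mul_of_nonneg ht hg' ht'
    have h := ((Fin.consEquiv (fun _ => ℕ)).symm.summable_iff
      (f := fun p : ℕ × (Fin n → ℕ) => c 0 ^ p.1 * ∏ i, c i.succ ^ p.2 i)).mpr hs
    refine h.congr fun ν => ?_
    simp [Fin.prod_univ_succ, Function.comp, Fin.consEquiv, Fin.tail]


/-- Relation between the Dirichlet-type multiple Changhee q-L-function and the multiple
q-zeta function formed with `q^f`:
`L_{q,r}(s,χ|w₁,…,w_r) = [f]_q^{-s}·Σ_{a₁,…,a_r=1}^{f} (Π χ(a_k))·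
  ζ_{q^f,r}(s,(w₁a₁+…+w_ra_r)/f | w₁,…,w_r)`. -/
theorem multLw_eq_sum_multZeta (q : ℝ) (hq0 : 0 < q) (hq1 : q < 1)
    (r : ℕ) (hr : 1 ≤ r) (ws : Fin r → ℝ) (hws : ∀ i, 0 < ws i)
    (f : ℕ) (hf : 0 < f) (χ : DirichletCharacter ℂ f) (s : ℂ) :
    multLw q r ws χ s = rpowC (qn q (f : ℝ)) (-s)
      * ∑ a : Fin r → Fin f, (∏ k, χ (((a k : ℕ) + 1 : ℕ) : ZMod f))
        * multZeta (q ^ f) r ((∑ i, ws i * (((a i : ℕ) : ℝ) + 1)) / (f : ℝ)) ws s := by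
  haveI hne : Nonempty (Fin r) := Fin.pos_iff_nonempty.mp hr
  have h1q : (0:ℝ) < 1 - q := by linarith
  set Q : ℝ := q ^ f with hQdef
  have hQ0 : 0 < Q := pow_pos hq0 f
  have hQ1 : Q < 1 := pow_lt_one₀ hq0.le hq1 hf.ne'
  have hfR : (0:ℝ) < (f:ℝ) := by exact_mod_cast hf
  set S : (Fin r → ℕ) → ℝ := fun ν => ∑ m, ws m * ((ν m : ℝ) + 1) with hSdef
  set T : (Fin r → ℕ) → ℂ := fun ν => (∏ k, χ ((ν k + 1 : ℕ) : ZMod f))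
    * ((q ^ S ν : ℝ) : ℂ) / rpowC (qn q (S ν)) s with hTdef
  set m0 : ℝ := ∑ i, ws i with hm0def
  have hm0 : 0 < m0 := Finset.sum_pos (fun i _ => hws i) univ_nonempty
  have hSlb : ∀ ν, m0 ≤ S ν := by
    intro ν
    refine Finset.sum_le_sum fun i _ => ?_
    have h01 : (0:ℝ) ≤ (ν i : ℝ) := Nat.cast_nonneg _
    nlinarith [hws i]
  have hSpos : ∀ ν, 0 < S ν := fun ν => lt_of_lt_of_le hm0 (hSlb ν)
  -- summability of T
  set c : Fin r → ℝ := fun i => q ^ (ws i) with hcdef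
  have hc0 : ∀ i, 0 < c i := fun i => Real.rpow_pos_of_pos hq0 _
  have hc1 : ∀ i, c i < 1 := fun i => Real.rpow_lt_one hq0.le hq1 (hws i)
  set M : ℝ := |Real.log (qn q m0)| + |Real.log (1/(1-q))| with hMdef
  set C : ℝ := Real.exp (|s.re| * M) with hCdef
  have hqS : ∀ ν, (q:ℝ) ^ S ν = (∏ i, c i ^ ν i) * ∏ i, c i := by
    intro ν
    rw [hSdef, Real.rpow_sum_of_pos hq0, ← Finset.prod_mul_distrib]
    refine Finset.prod_congr rfl fun i _ => ?_
    rw [Real.rpow_mul hq0.le]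
    have : ((ν i : ℝ) + 1) = ((ν i + 1 : ℕ) : ℝ) := by push_cast; ring
    rw [this, Real.rpow_natCast, pow_succ]
  have hbound : ∀ ν, ‖T ν‖ ≤ (C * ∏ i, c i) * ∏ i, c i ^ ν i := by
    intro ν
    have hρ : 0 < qn q (S ν) := qn_pos hq0 hq1 (hSpos ν)
    have hqm0 : 0 < qn q m0 := qn_pos hq0 hq1 hm0
    have hlog : |Real.log (qn q (S ν))| ≤ M := by
      rw [abs_le]
      constructor
      · have h1 : Real.log (qn q m0) ≤ Real.log (qn q (S ν)) :=
          Real.log_le_log hqm0 (qn_mono hq0 hq1 (hSlb ν))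
        have h2 : -|Real.log (qn q m0)| ≤ Real.log (qn q m0) := neg_abs_le _
        have h3 : (0:ℝ) ≤ |Real.log (1/(1-q))| := abs_nonneg _
        rw [hMdef]; linarith
      · have h1 : Real.log (qn q (S ν)) ≤ Real.log (1/(1-q)) :=
          Real.log_le_log hρ (qn_lt hq0 hq1 _).le
        have h2 : Real.log (1/(1-q)) ≤ |Real.log (1/(1-q))| := le_abs_self _
        have h3 : (0:ℝ) ≤ |Real.log (qn q m0)| := abs_nonneg _
        rw [hMdef]; linarith
    have hden : Real.exp (-(|s.re| * M)) ≤ ‖rpowC (qn q (S ν)) s‖ := by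
      rw [norm_rpowC]
      apply Real.exp_le_exp.mpr
      have h1 : |s.re * Real.log (qn q (S ν))| ≤ |s.re| * M := by
        rw [abs_mul]
        exact mul_le_mul_of_nonneg_left hlog (abs_nonneg _)
      have h2 := neg_abs_le (s.re * Real.log (qn q (S ν)))
      linarith
    have hnum : ‖(∏ k, χ ((ν k + 1 : ℕ) : ZMod f)) * ((q ^ S ν : ℝ) : ℂ)‖ ≤ 1 * (q ^ S ν) := by
      rw [norm_mul]
      apply mul_le_mul
      · rw [norm_prod]
        exact Finset.prod_le_one (fun k _ => norm_nonneg _)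
          (fun k _ => DirichletCharacter.norm_le_one χ _)
      · rw [Complex.norm_real, Real.norm_of_nonneg (Real.rpow_pos_of_pos hq0 _).le]
      · exact norm_nonneg _
      · exact zero_le_one
    have hexp : (0:ℝ) < Real.exp (-(|s.re| * M)) := Real.exp_pos _
    have h1 : ‖T ν‖ ≤ (1 * (q ^ S ν)) / Real.exp (-(|s.re| * M)) := by
      rw [hTdef, norm_div]
      exact div_le_div₀ (by positivity) hnum hexp hden
    have h2 : (1 * ((q:ℝ) ^ S ν)) / Real.exp (-(|s.re| * M)) = C * (q ^ S ν) := by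
      rw [one_mul, Real.exp_neg, div_eq_mul_inv, inv_inv, hCdef]
      ring
    rw [h2, hqS ν] at h1
    calc ‖T ν‖ ≤ C * ((∏ i, c i ^ ν i) * ∏ i, c i) := h1
      _ = (C * ∏ i, c i) * ∏ i, c i ^ ν i := by ring
  have hT : Summable T :=
    Summable.of_norm_bounded
      ((summable_pi_geometric r c (fun i => (hc0 i).le) hc1).mul_left _) hbound
  -- decomposition
  set e := decompEquiv r f hf with hedef
  set wA : (Fin r → Fin f) → ℝ := fun a => (∑ i, ws i * (((a i : ℕ) : ℝ) + 1)) / (f : ℝ)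
    with hwAdef
  set Z : (Fin r → Fin f) → (Fin r → ℕ) → ℂ := fun a μ =>
    ((Q ^ (wA a + ∑ i, ws i * ((μ i : ℕ) : ℝ)) : ℝ) : ℂ)
      / rpowC (qn Q (wA a + ∑ i, ws i * ((μ i : ℕ) : ℝ))) s with hZdef
  have hwApos : ∀ a, 0 < wA a := by
    intro a
    apply div_pos _ hfR
    refine Finset.sum_pos (fun i _ => ?_) univ_nonempty
    have h01 : (0:ℝ) ≤ ((a i : ℕ) : ℝ) := Nat.cast_nonneg _
    nlinarith [hws i]
  have hterm : ∀ (a : Fin r → Fin f) (μ : Fin r → ℕ),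
      T (e (a, μ)) = rpowC (qn q (f:ℝ)) (-s)
        * (∏ k, χ (((a k : ℕ) + 1 : ℕ) : ZMod f)) * Z a μ := by
    intro a μ
    set x : ℝ := wA a + ∑ i, ws i * ((μ i : ℕ) : ℝ) with hxdef
    have hx : 0 < x := by
      have h1 : (0:ℝ) ≤ ∑ i, ws i * ((μ i : ℕ) : ℝ) :=
        Finset.sum_nonneg fun i _ => mul_nonneg (hws i).le (Nat.cast_nonneg _)
      have h2 := hwApos a
      rw [hxdef]; linarith
    have hfwa : (f:ℝ) * wA a = ∑ i, ws i * (((a i : ℕ) : ℝ) + 1) := by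
      rw [hwAdef]; field_simp
    have hSx : S (e (a, μ)) = (f:ℝ) * x := by
      have h1 : ∀ m : Fin r, ws m * ((((e (a,μ)) m : ℕ) : ℝ) + 1)
          = ws m * (((a m : ℕ) : ℝ) + 1) + (f:ℝ) * (ws m * ((μ m : ℕ) : ℝ)) := by
        intro m
        have hm : (e (a,μ)) m = (a m : ℕ) + f * μ m := rfl
        rw [hm]; push_cast; ring
      calc S (e (a,μ))
          = ∑ m, (ws m * (((a m : ℕ) : ℝ) + 1) + (f:ℝ) * (ws m * ((μ m : ℕ) : ℝ))) :=
            Finset.sum_congr rfl fun m _ => h1 m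
        _ = (f:ℝ) * x := by
            rw [Finset.sum_add_distrib, ← Finset.mul_sum, hxdef, mul_add, hfwa]
    have hA : rpowC (qn q (f:ℝ)) s ≠ 0 := rpowC_ne_zero _ _
    have hB : rpowC (qn Q x) s ≠ 0 := rpowC_ne_zero _ _
    have hpow : q ^ S (e (a,μ)) = Q ^ x := by
      rw [hSx, Real.rpow_mul hq0.le, Real.rpow_natCast, hQdef]
    have hqn : qn q (S (e (a,μ))) = qn q (f:ℝ) * qn Q x := by
      rw [hSx, qn_mul_nat hq0 hq1 f hf x, hQdef]
    have hsplit : rpowC (qn q (S (e (a,μ)))) s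
        = rpowC (qn q (f:ℝ)) s * rpowC (qn Q x) s := by
      rw [hqn]; exact rpowC_mul_base (qn_pos hq0 hq1 hfR) (qn_pos hQ0 hQ1 hx) s
    have hχ : (∏ k, χ (((e (a,μ)) k + 1 : ℕ) : ZMod f))
        = ∏ k, χ (((a k : ℕ) + 1 : ℕ) : ZMod f) := by
      refine Finset.prod_congr rfl fun k _ => ?_
      congr 1
      have hk : (e (a,μ)) k = (a k : ℕ) + f * μ k := rfl
      rw [hk]
      push_cast [ZMod.natCast_self]
      ring
    show (∏ k, χ (((e (a,μ)) k + 1 : ℕ) : ZMod f)) * ((q ^ S (e (a,μ)) : ℝ) : ℂ)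
        / rpowC (qn q (S (e (a,μ)))) s = _
    rw [hχ, hpow, hsplit, rpowC_neg]
    have hZ : Z a μ = ((Q ^ x : ℝ) : ℂ) / rpowC (qn Q x) s := rfl
    rw [hZ]
    field_simp
  have key : ∑' ν, T ν = ∑ a : Fin r → Fin f,
      rpowC (qn q (f:ℝ)) (-s) * (∏ k, χ (((a k : ℕ) + 1 : ℕ) : ZMod f)) * ∑' μ, Z a μ := by
    have h0 : ∑' ν, T ν = ∑' p : (Fin r → Fin f) × (Fin r → ℕ), T (e p) := (e.tsum_eq T).symm
    have hTe0 : Summable (T ∘ e) := (Equiv.summable_iff e (f := T)).mpr hT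
    have hTe : Summable fun p : (Fin r → Fin f) × (Fin r → ℕ) => T (e p) :=
      hTe0.congr fun p => rfl
    have h1 : ∑' p : (Fin r → Fin f) × (Fin r → ℕ), T (e p)
        = ∑' (a : Fin r → Fin f), ∑' (μ : Fin r → ℕ), T (e (a, μ)) :=
      Summable.tsum_prod' hTe (fun a => hTe.prod_factor a)
    rw [h0, h1, tsum_fintype]
    refine Finset.sum_congr rfl fun a _ => ?_
    rw [← tsum_mul_left]
    exact tsum_congr fun μ => hterm a μ
  calc multLw q r ws χ s
      = ((∏ j, ws j : ℝ) : ℂ) * ∑' ν, T ν := rfl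
    _ = ((∏ j, ws j : ℝ) : ℂ) * ∑ a : Fin r → Fin f,
          rpowC (qn q (f:ℝ)) (-s) * (∏ k, χ (((a k : ℕ) + 1 : ℕ) : ZMod f)) * ∑' μ, Z a μ := by
        rw [key]
    _ = rpowC (qn q (f:ℝ)) (-s) * ∑ a : Fin r → Fin f,
          (∏ k, χ (((a k : ℕ) + 1 : ℕ) : ZMod f)) * (((∏ j, ws j : ℝ) : ℂ) * ∑' μ, Z a μ) := by
        rw [Finset.mul_sum, Finset.mul_sum]
        exact Finset.sum_congr rfl fun a _ => by ring
    _ = rpowC (qn q (f : ℝ)) (-s)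
        * ∑ a : Fin r → Fin f, (∏ k, χ (((a k : ℕ) + 1 : ℕ) : ZMod f))
          * multZeta (q ^ f) r ((∑ i, ws i * (((a i : ℕ) : ℝ) + 1)) / (f : ℝ)) ws s := by
        refine congrArg _ (Finset.sum_congr rfl fun a _ => congrArg _ ?_)
        rfl
end
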